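/- Let M be a positroid with decorated permutation (π, col) and j a non-fixed point of π, and let M' = { H ∈ M : j ∈ H } with decorated permutation (μ, col''). Then μ(j) = j, and col''(j) = -1 (j lies in every basis of M'). Consequently the decorated permutation of the contraction M/{j} is obtained from (μ, col'') by switching col(j) to +1. -/

import Mathlib

open Finset

/-- Position of `a` in the cyclic (linear) order starting at `t` on `Fin n`. -/
def cval {n : ℕ} (t a : Fin n) : ℕ := ((a - t : Fin n) : ℕ)

/-- Gale order on finsets of `Fin n` induced by the linear order with key `f`:
compare the sorted lists of keys coordinatewise. -/
def galeLEKey {n : ℕ} (f : Fin n → ℕ) (A B : Finset (Fin n)) : Prop :=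
  List.Forall₂ (· ≤ ·) ((A.image f).sort (· ≤ ·)) ((B.image f).sort (· ≤ ·))

/-- Gale order `≤_t` induced by the cyclic order starting at `t`. -/
def galeLE {n : ℕ} (t : Fin n) (A B : Finset (Fin n)) : Prop :=
  galeLEKey (cval t) A B

/-- The set of maximal elements of `D` w.r.t. `≤_a` (a singleton when `D` is nonempty). -/
def cmax {n : ℕ} (a : Fin n) (D : Finset (Fin n)) : Finset (Fin n) :=
  D.filter (fun x => ∀ y ∈ D, cval a y ≤ cval a x)

/-- The set of minimal elements of `D` w.r.t. `≤_a` (a singleton when `D` is nonempty). -/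
def cmin {n : ℕ} (a : Fin n) (D : Finset (Fin n)) : Finset (Fin n) :=
  D.filter (fun x => ∀ y ∈ D, cval a x ≤ cval a y)

/-- A Grassmann necklace on `[n]`. -/
def IsGrassmannNecklace {n : ℕ} [NeZero n] (I : Fin n → Finset (Fin n)) : Prop :=
  ∀ i : Fin n,
    (i ∈ I i → ∃ j : Fin n, I (i + 1) = insert j (I i \ {i})) ∧
    (i ∉ I i → I (i + 1) = I i)

/-- A decorated permutation: a permutation with fixed points colored by `1` or `-1`
(non-fixed points carry the dummy color `1`). -/
structure DecoratedPerm (n : ℕ) where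
  π : Equiv.Perm (Fin n)
  col : Fin n → ℤ
  col_fixed : ∀ i, π i = i → col i = 1 ∨ col i = -1
  col_nonfixed : ∀ i, π i ≠ i → col i = 1

/-- The Grassmann necklace associated to a decorated permutation:
`I_r = { i : i <_r π⁻¹(i), or π(i) = i and col(i) = -1 }`. -/
def necklaceOf {n : ℕ} (P : DecoratedPerm n) : Fin n → Finset (Fin n) :=
  fun r => Finset.univ.filter
    (fun i => cval r i < cval r (P.π.symm i) ∨ (P.π i = i ∧ P.col i = -1))

/-- The forward map from Grassmann necklaces to decorated permutations:
`P` corresponds to the necklace `I`. -/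
def Corresponds {n : ℕ} [NeZero n] (I : Fin n → Finset (Fin n)) (P : DecoratedPerm n) : Prop :=
  ∀ i : Fin n,
    ((I (i + 1) = I i ∧ i ∉ I i) → (P.π i = i ∧ P.col i = 1)) ∧
    ((I (i + 1) = I i ∧ i ∈ I i) → (P.π i = i ∧ P.col i = -1)) ∧
    (∀ j : Fin n, j ≠ i → i ∈ I i → I (i + 1) = insert j (I i \ {i}) → P.π i = j)

/-- `phiSet I j a` is `{j}` if `j ∈ I_a`, and otherwise `{max_a (I_a \ I_j)}`. -/
def phiSet {n : ℕ} (I : Fin n → Finset (Fin n)) (j a : Fin n) : Finset (Fin n) :=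
  if j ∈ I a then {j} else cmax a (I a \ I j)

/-- One pass of the contraction algorithm (fuel-indexed; the loop walks `a ← a+1`). -/
def contractLoop {n : ℕ} [NeZero n] (π : Equiv.Perm (Fin n)) (j : Fin n) :
    ℕ → (Fin n → Fin n) → (Fin n → ℤ) → Fin n → Fin n →
      (Fin n → Fin n) × (Fin n → ℤ)
  | 0, μ, c, q, a => (Function.update μ a q, c)
  | fuel + 1, μ, c, q, a =>
    if π a = j then (Function.update μ a q, c)
    else if q = a ∨ (cval (a + 1) q < cval (a + 1) (π a) ∧
                      cval (a + 1) (π a) < cval (a + 1) j) then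
      contractLoop π j fuel (Function.update μ a q)
        (if q = a then Function.update c a 1 else c) (π a) (a + 1)
    else
      contractLoop π j fuel μ c q (a + 1)

/-- The contraction algorithm: output `(μ, col')` from `(π, col)` and `j`. -/
def contractAlg {n : ℕ} [NeZero n] (π : Equiv.Perm (Fin n)) (col : Fin n → ℤ) (j : Fin n) :
    (Fin n → Fin n) × (Fin n → ℤ) :=
  contractLoop π j n (Function.update (⇑π) j j) (Function.update col j 1) (π j) (j + 1)

/-- One pass of the restriction algorithm (the loop walks `a ← a-1`). -/
def restrictLoop {n : ℕ} [NeZero n] (π : Equiv.Perm (Fin n)) (j : Fin n) :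
    ℕ → (Fin n → Fin n) → (Fin n → ℤ) → Fin n → Fin n →
      (Fin n → Fin n) × (Fin n → ℤ)
  | 0, μ, c, q, a => (Function.update μ a q, c)
  | fuel + 1, μ, c, q, a =>
    if π a = j then (Function.update μ a q, c)
    else if q = a ∨ (cval a j < cval a (π a) ∧ cval a (π a) < cval a q) then
      restrictLoop π j fuel (Function.update μ a q)
        (if q = a then Function.update c a 1 else c) (π a) (a - 1)
    else
      restrictLoop π j fuel μ c q (a - 1)

/-- The restriction algorithm: output `(μ, col')` from `(π, col)` and `j`. -/
def restrictAlg {n : ℕ} [NeZero n] (π : Equiv.Perm (Fin n)) (col : Fin n → ℤ) (j : Fin n) :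
    (Fin n → Fin n) × (Fin n → ℤ) :=
  restrictLoop π j n (Function.update (⇑π) j j) (Function.update col j 1) (π j) (j - 1)


set_option linter.unusedSectionVars false

open scoped Fin.NatCast Fin.CommRing

section AuxContraction
variable {n : ℕ} [NeZero n]

lemma cval_lt (t a : Fin n) : cval t a < n := (a - t).isLt
lemma cval_self (t : Fin n) : cval t t = 0 := by simp [cval]
lemma cval_inj {t a b : Fin n} (h : cval t a = cval t b) : a = b := by
  have : a - t = b - t := Fin.val_injective h
  exact sub_left_injective this
lemma cval_eq_zero {t a : Fin n} : cval t a = 0 ↔ a = t := by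
  constructor
  · intro h
    have h2 : cval t a = cval t t := by rw [cval_self]; exact h
    exact cval_inj h2
  · rintro rfl; exact cval_self _
lemma cval_succ {r a : Fin n} (h : a ≠ r) : cval r a = cval (r + 1) a + 1 := by
  have h1 : a - r = (a - (r + 1)) + 1 := by ring
  have h2 : (a - (r+1)).val + 1 < n ∨ (a - (r+1)).val + 1 = n := by
    have := (a - (r+1)).isLt; omega
  rcases h2 with h2 | h2
  · have : ((a - (r+1)) + 1).val = (a - (r+1)).val + 1 := by
      rw [Fin.add_def]; simp [Nat.mod_eq_of_lt h2]
    simp only [cval, h1, this]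
  · exfalso
    have : ((a - (r+1)) + 1).val = 0 := by rw [Fin.add_def]; simp [h2]
    have h3 : a - r = 0 := by rw [h1]; exact Fin.val_injective (by simpa using this)
    exact h (by simpa [sub_eq_zero] using h3)
lemma cval_succ_self (r : Fin n) : cval (r + 1) r = n - 1 := by
  have h1 : (r - (r+1)) + 1 = 0 := by ring
  have h2 : ((r - (r+1)) + 1).val = 0 := by rw [h1]; rfl
  rw [Fin.add_def] at h2
  have h2' : ((r - (r+1)).val + ((1:Fin n)).val) % n = 0 := h2
  have h3 := (r - (r+1)).isLt
  have h5 : ((1 : Fin n) : ℕ) = 1 % n := rfl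
  have h7 := Nat.mod_lt 1 (Nat.pos_of_ne_zero (NeZero.ne n))
  have h8 := Nat.mod_lt ((r - (r+1)).val + ((1:Fin n)).val) (Nat.pos_of_ne_zero (NeZero.ne n))
  unfold cval
  rcases Nat.lt_or_ge n 2 with h | h
  · omega
  · have h6 : ((1 : Fin n) : ℕ) = 1 := by rw [h5, Nat.mod_eq_of_lt (by omega)]
    rw [h6] at h2'
    rcases Nat.lt_or_ge ((r - (r+1)).val + 1) n with hh | hh
    · rw [Nat.mod_eq_of_lt hh] at h2'; omega
    · omega

end AuxContraction

lemma forall2_counts (L M : List ℕ) (h : List.Forall₂ (· ≤ ·) L M) (x : ℕ) :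
    M.countP (· ≤ x) ≤ L.countP (· ≤ x) := by
  induction h with
  | nil => simp
  | cons hab h ih =>
    rename_i a b l m
    simp only [List.countP_cons]
    by_cases hb : b ≤ x
    · have ha : a ≤ x := le_trans hab hb
      simp [ha, hb]; omega
    · by_cases ha : a ≤ x <;> simp [ha, hb] <;> omega

lemma counts_forall2 (L M : List ℕ) (hL : L.Pairwise (· ≤ ·)) (hM : M.Pairwise (· ≤ ·))
    (hlen : L.length = M.length) (hcnt : ∀ x, M.countP (· ≤ x) ≤ L.countP (· ≤ x)) :
    List.Forall₂ (· ≤ ·) L M := by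
  induction L generalizing M with
  | nil =>
    cases M with
    | nil => exact List.Forall₂.nil
    | cons b m => simp at hlen
  | cons a l ih =>
    cases M with
    | nil => simp at hlen
    | cons b m =>
      have hab : a ≤ b := by
        have h1 := hcnt b
        simp only [List.countP_cons] at h1
        have hb : (b ≤ b) = True := by simp
        by_contra hab
        push_neg at hab
        have ha : ¬ a ≤ b := by omega
        have hl0 : l.countP (· ≤ b) = 0 := by
          rw [List.countP_eq_zero]
          intro c hc
          have := (List.pairwise_cons.mp hL).1 c hc
          simp only [decide_eq_true_eq]; omega
        simp [ha, hl0] at h1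
      refine List.Forall₂.cons hab (ih m (List.pairwise_cons.mp hL).2 (List.pairwise_cons.mp hM).2
        (by simpa using hlen) ?_)
      intro x
      have h1 := hcnt x
      simp only [List.countP_cons] at h1
      by_cases hb : b ≤ x
      · have ha : a ≤ x := le_trans hab hb
        simp [ha, hb] at h1; omega
      · have hm0 : m.countP (· ≤ x) = 0 := by
          rw [List.countP_eq_zero]
          intro c hc
          have := (List.pairwise_cons.mp hM).1 c hc
          simp only [decide_eq_true_eq]; omega
        simp [hm0]

section AuxContraction2
variable {n : ℕ} [NeZero n]

def cnt (t : Fin n) (x : ℕ) (A : Finset (Fin n)) : ℕ :=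
  (A.filter fun a => cval t a ≤ x).card

lemma cval_injective (t : Fin n) : Function.Injective (cval t) := fun _ _ h => cval_inj h

lemma sort_key_length (t : Fin n) (A : Finset (Fin n)) :
    ((A.image (cval t)).sort (· ≤ ·)).length = A.card := by
  rw [Finset.length_sort, Finset.card_image_of_injective _ (cval_injective t)]

lemma sort_key_countP (t : Fin n) (x : ℕ) (A : Finset (Fin n)) :
    ((A.image (cval t)).sort (· ≤ ·)).countP (· ≤ x) = cnt t x A := by
  have h1 : ((A.image (cval t)).sort (· ≤ ·)).countP (· ≤ x)
      = ((A.image (cval t)).toList).countP (· ≤ x) :=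
    List.Perm.countP_eq _ (Finset.sort_perm_toList _ _)
  rw [h1]
  have h2 : ((A.image (cval t)).toList).countP (fun a => decide (a ≤ x))
      = ((A.image (cval t)).filter (· ≤ x)).card := by
    rw [Finset.toList, ← Multiset.coe_countP, Multiset.coe_toList,
      Multiset.countP_eq_card_filter]
    rfl
  rw [h2, Finset.filter_image, Finset.card_image_of_injective _ (cval_injective t)]
  rfl

lemma galeLE_iff_counts (t : Fin n) (A B : Finset (Fin n)) :
    galeLE t A B ↔ (A.card = B.card ∧ ∀ x, cnt t x B ≤ cnt t x A) := by
  unfold galeLE galeLEKey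
  constructor
  · intro h
    refine ⟨?_, fun x => ?_⟩
    · have := h.length_eq
      rwa [sort_key_length, sort_key_length] at this
    · have := forall2_counts _ _ h x
      rwa [sort_key_countP, sort_key_countP] at this
  · rintro ⟨h1, h2⟩
    refine counts_forall2 _ _ (Finset.pairwise_sort _ _) (Finset.pairwise_sort _ _) ?_ ?_
    · rw [sort_key_length, sort_key_length, h1]
    · intro x; rw [sort_key_countP, sort_key_countP]; exact h2 x

lemma cnt_insert (t : Fin n) (x : ℕ) {j : Fin n} {A : Finset (Fin n)} (hj : j ∉ A) :
    cnt t x (insert j A) = cnt t x A + (if cval t j ≤ x then 1 else 0) := by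
  unfold cnt
  rw [Finset.filter_insert]
  split_ifs with h
  · rw [Finset.card_insert_of_notMem (fun hc => hj (Finset.mem_of_mem_filter _ hc))]
  · rfl

lemma galeLE_insert_iff (t : Fin n) {j : Fin n} {A B : Finset (Fin n)}
    (hA : j ∉ A) (hB : j ∉ B) :
    galeLE t (insert j A) (insert j B) ↔ galeLE t A B := by
  rw [galeLE_iff_counts, galeLE_iff_counts,
    Finset.card_insert_of_notMem hA, Finset.card_insert_of_notMem hB]
  constructor
  · rintro ⟨h1, h2⟩
    refine ⟨by omega, fun x => ?_⟩
    have := h2 x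
    rw [cnt_insert t x hA, cnt_insert t x hB] at this
    split_ifs at this <;> omega
  · rintro ⟨h1, h2⟩
    refine ⟨by omega, fun x => ?_⟩
    rw [cnt_insert t x hA, cnt_insert t x hB]
    have := h2 x
    split_ifs <;> omega


lemma mem_necklaceOf {P : DecoratedPerm n} {r i : Fin n} :
    i ∈ necklaceOf P r ↔
      (cval r i < cval r (P.π.symm i) ∨ (P.π i = i ∧ P.col i = -1)) := by
  simp [necklaceOf]

lemma symm_eq_iff {P : DecoratedPerm n} {i : Fin n} : P.π.symm i = i ↔ P.π i = i := by
  constructor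
  · intro hc
    have h2 := congrArg P.π hc
    rw [Equiv.apply_symm_apply] at h2
    exact h2.symm
  · intro hc
    exact Equiv.symm_apply_eq _ |>.mpr hc.symm

lemma symm_ne_iff {P : DecoratedPerm n} {i : Fin n} : P.π.symm i ≠ i ↔ P.π i ≠ i :=
  not_congr symm_eq_iff

lemma mem_necklace_self {P : DecoratedPerm n} {r : Fin n} (h : P.π r ≠ r) :
    r ∈ necklaceOf P r := by
  rw [mem_necklaceOf]
  left
  rw [cval_self]
  have h2 : P.π.symm r ≠ r := symm_ne_iff.mpr h
  have := cval_eq_zero (t := r) (a := P.π.symm r)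
  have h3 := Nat.pos_of_ne_zero (fun hc => h2 (this.mp hc))
  omega

lemma pi_not_mem_necklace_self {P : DecoratedPerm n} {r : Fin n} (h : P.π r ≠ r) :
    P.π r ∉ necklaceOf P r := by
  rw [mem_necklaceOf]
  push_neg
  constructor
  · simp [cval_self]
  · intro hc
    exact absurd (P.π.injective (by rw [hc])) h

lemma necklace_succ_fixed {P : DecoratedPerm n} {r : Fin n} (h : P.π r = r) :
    necklaceOf P (r + 1) = necklaceOf P r := by
  ext i
  rw [mem_necklaceOf, mem_necklaceOf]
  by_cases hi : i = r
  · subst hi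
    have hs : P.π.symm i = i := symm_eq_iff.mpr h
    rw [hs]
    simp
  · have hs : P.π.symm i ≠ r := by
      intro hc
      exact hi (by rw [← P.π.apply_symm_apply i, hc, h])
    rw [cval_succ hi, cval_succ hs]
    omega

lemma necklace_succ {P : DecoratedPerm n} {r : Fin n} (h : P.π r ≠ r) :
    necklaceOf P (r + 1) = insert (P.π r) ((necklaceOf P r).erase r) := by
  have hn2 : 1 ≤ n - 1 := by
    rcases Nat.lt_or_ge n 2 with hn | hn
    · interval_cases n
      · exact absurd rfl (NeZero.ne 0)
      · exact absurd (Subsingleton.elim _ _) h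
    · omega
  ext i
  rw [Finset.mem_insert, Finset.mem_erase, mem_necklaceOf, mem_necklaceOf]
  by_cases hi : i = r
  · subst hi
    have h1 := cval_succ_self i
    have h2 := cval_lt (i + 1) (P.π.symm i)
    simp only [h1]
    constructor
    · rintro (hc | ⟨hc, _⟩)
      · omega
      · exact absurd hc h
    · rintro (hc | ⟨hc, _⟩)
      · exact absurd hc.symm h
      · exact absurd rfl hc
  · by_cases hpi : i = P.π r
    · subst hpi
      have hs : P.π.symm (P.π r) = r := P.π.symm_apply_apply r
      rw [hs]
      have h1 := cval_succ_self r
      have h2 := cval_succ hi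
      have h3 := cval_lt r (P.π r)
      simp only [h1]
      constructor
      · intro _; left; trivial
      · intro _; left; omega
    · have hs : P.π.symm i ≠ r := fun hc => hpi (by rw [← hc]; simp)
      rw [cval_succ hi, cval_succ hs]
      constructor
      · rintro (hc | hc)
        · exact Or.inr ⟨hi, Or.inl (by omega)⟩
        · exact Or.inr ⟨hi, Or.inr hc⟩
      · rintro (hc | ⟨_, hc | hc⟩)
        · exact absurd hc hpi
        · left; omega
        · right; exact hc


lemma cval_add_cast {t : Fin n} {s : ℕ} (hs : s < n) : cval t (t + (s : Fin n)) = s := by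
  unfold cval
  rw [add_sub_cancel_left]
  rw [Fin.val_natCast]
  exact Nat.mod_eq_of_lt hs

def Aset (P : DecoratedPerm n) (t : Fin n) (x s : ℕ) : Finset (Fin n) :=
  univ.filter fun y => P.π y ≠ y ∧ cval t y ≤ x ∧ cval t (P.π.symm y) < s

def Bset (P : DecoratedPerm n) (t : Fin n) (x s : ℕ) : Finset (Fin n) :=
  univ.filter fun q => P.π q ≠ q ∧ cval t q ≤ x ∧ cval t q < s

lemma key_identity (P : DecoratedPerm n) (t : Fin n) (x : ℕ) :
    ∀ s : ℕ, s ≤ n →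
      cnt t x (necklaceOf P (t + (s : Fin n))) + (Bset P t x s).card
        = cnt t x (necklaceOf P t) + (Aset P t x s).card := by
  intro s
  induction s with
  | zero =>
    intro _
    have hA : Aset P t x 0 = ∅ := by
      ext y; simp [Aset]
    have hB : Bset P t x 0 = ∅ := by
      ext y; simp [Bset]
    simp [hA, hB]
  | succ s ih =>
    intro hs
    have hs' : s < n := hs
    have ihs := ih (le_of_lt hs')
    set r : Fin n := t + (s : Fin n) with hr
    have hcr : cval t r = s := cval_add_cast hs'
    have hr1 : t + ((s + 1 : ℕ) : Fin n) = r + 1 := by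
      rw [hr]; push_cast; ring
    rw [hr1]
    by_cases hfix : P.π r = r
    · have hA : Aset P t x (s + 1) = Aset P t x s := by
        ext y
        simp only [Aset, mem_filter, mem_univ, true_and]
        constructor
        · rintro ⟨h1, h2, h3⟩
          refine ⟨h1, h2, ?_⟩
          rcases Nat.lt_or_ge (cval t (P.π.symm y)) s with h | h
          · exact h
          · exfalso
            have : cval t (P.π.symm y) = s := by omega
            have : P.π.symm y = r := cval_inj (by rw [this, hcr])
            have : y = P.π r := by rw [← this, Equiv.apply_symm_apply]
            rw [this, hfix] at h1
            exact h1 hfix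
        · rintro ⟨h1, h2, h3⟩
          exact ⟨h1, h2, by omega⟩
      have hB : Bset P t x (s + 1) = Bset P t x s := by
        ext q
        simp only [Bset, mem_filter, mem_univ, true_and]
        constructor
        · rintro ⟨h1, h2, h3⟩
          refine ⟨h1, h2, ?_⟩
          rcases Nat.lt_or_ge (cval t q) s with h | h
          · exact h
          · exfalso
            have : q = r := cval_inj (by rw [hcr]; omega)
            rw [this] at h1
            exact h1 hfix
        · rintro ⟨h1, h2, h3⟩
          exact ⟨h1, h2, by omega⟩
      rw [necklace_succ_fixed hfix, hA, hB, ihs]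
    · -- nonfixed case
      have hπr : P.π.symm (P.π r) = r := Equiv.symm_apply_apply _ _
      have hA : (Aset P t x (s + 1)).card
          = (Aset P t x s).card + (if cval t (P.π r) ≤ x then 1 else 0) := by
        have hmem : P.π r ∉ Aset P t x s := by
          simp only [Aset, mem_filter, mem_univ, true_and, not_and]
          intro _ _
          rw [hπr, hcr]
          omega
        split_ifs with hx
        · have : Aset P t x (s + 1) = insert (P.π r) (Aset P t x s) := by
            ext y
            simp only [Aset, mem_filter, mem_univ, true_and, Finset.mem_insert]
            constructor
            · rintro ⟨h1, h2, h3⟩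
              rcases Nat.lt_or_ge (cval t (P.π.symm y)) s with h | h
              · exact Or.inr ⟨h1, h2, h⟩
              · left
                have he : cval t (P.π.symm y) = s := by omega
                have : P.π.symm y = r := cval_inj (by rw [he, hcr])
                rw [← this, Equiv.apply_symm_apply]
            · rintro (rfl | ⟨h1, h2, h3⟩)
              · refine ⟨?_, hx, by rw [hπr, hcr]; omega⟩
                intro hc
                exact hfix (P.π.injective hc)
              · exact ⟨h1, h2, by omega⟩
          rw [this, Finset.card_insert_of_notMem hmem]
        · have : Aset P t x (s + 1) = Aset P t x s := by
            ext y
            simp only [Aset, mem_filter, mem_univ, true_and]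
            constructor
            · rintro ⟨h1, h2, h3⟩
              refine ⟨h1, h2, ?_⟩
              rcases Nat.lt_or_ge (cval t (P.π.symm y)) s with h | h
              · exact h
              · exfalso
                have he : cval t (P.π.symm y) = s := by omega
                have : P.π.symm y = r := cval_inj (by rw [he, hcr])
                have hy : y = P.π r := by rw [← this, Equiv.apply_symm_apply]
                rw [hy] at h2
                exact hx h2
            · rintro ⟨h1, h2, h3⟩
              exact ⟨h1, h2, by omega⟩
          rw [this]
          omega
      have hB : (Bset P t x (s + 1)).card
          = (Bset P t x s).card + (if s ≤ x then 1 else 0) := by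
        have hmem : r ∉ Bset P t x s := by
          simp only [Bset, mem_filter, mem_univ, true_and, not_and]
          intro _ _
          rw [hcr]
          omega
        split_ifs with hx
        · have : Bset P t x (s + 1) = insert r (Bset P t x s) := by
            ext q
            simp only [Bset, mem_filter, mem_univ, true_and, Finset.mem_insert]
            constructor
            · rintro ⟨h1, h2, h3⟩
              rcases Nat.lt_or_ge (cval t q) s with h | h
              · exact Or.inr ⟨h1, h2, h⟩
              · left
                exact cval_inj (t := t) (by rw [hcr]; omega)
            · rintro (rfl | ⟨h1, h2, h3⟩)
              · exact ⟨hfix, by rw [hcr]; omega, by rw [hcr]; omega⟩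
              · exact ⟨h1, h2, by omega⟩
          rw [this, Finset.card_insert_of_notMem hmem]
        · have : Bset P t x (s + 1) = Bset P t x s := by
            ext q
            simp only [Bset, mem_filter, mem_univ, true_and]
            constructor
            · rintro ⟨h1, h2, h3⟩
              refine ⟨h1, h2, ?_⟩
              rcases Nat.lt_or_ge (cval t q) s with h | h
              · exact h
              · exfalso
                have he : cval t q = s := by omega
                omega
            · rintro ⟨h1, h2, h3⟩
              exact ⟨h1, h2, by omega⟩
          rw [this]
          omega
      have hcnt : cnt t x (necklaceOf P (r + 1)) + (if cval t r ≤ x then 1 else 0)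
          = cnt t x (necklaceOf P r) + (if cval t (P.π r) ≤ x then 1 else 0) := by
        have h1 : necklaceOf P (r + 1) = insert (P.π r) ((necklaceOf P r).erase r) :=
          necklace_succ hfix
        have h2 : P.π r ∉ (necklaceOf P r).erase r := by
          intro hc
          exact pi_not_mem_necklace_self hfix (Finset.mem_of_mem_erase hc)
        have h3 : necklaceOf P r = insert r ((necklaceOf P r).erase r) :=
          (Finset.insert_erase (mem_necklace_self hfix)).symm
        rw [h1, cnt_insert t x h2]
        conv_rhs => rw [h3, cnt_insert t x (Finset.notMem_erase _ _)]
        ring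
      rw [hcr] at hcnt
      split_ifs at hcnt hA hB <;> omega
lemma Aset_card_le (P : DecoratedPerm n) (t : Fin n) (x s : ℕ) :
    (Aset P t x s).card ≤ (Bset P t x s).card := by
  rcases Nat.lt_or_ge x s with hxs | hxs
  · -- s > x : identity injection
    apply Finset.card_le_card
    intro y hy
    simp only [Aset, mem_filter, mem_univ, true_and] at hy
    simp only [Bset, mem_filter, mem_univ, true_and]
    exact ⟨hy.1, hy.2.1, by omega⟩
  · -- s ≤ x : map via π.symm
    apply Finset.card_le_card_of_injOn (fun y => P.π.symm y)
    · intro y hy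
      simp only [Aset, Finset.mem_coe, mem_filter, mem_univ, true_and] at hy
      simp only [Bset, Finset.mem_coe, mem_filter, mem_univ, true_and]
      refine ⟨?_, by omega, hy.2.2⟩
      intro hc
      rw [Equiv.apply_symm_apply] at hc
      exact hy.1 ((congrArg P.π hc).trans (P.π.apply_symm_apply y))
    · intro a _ b _ hab
      exact P.π.symm.injective hab

lemma Aset_card_eq (P : DecoratedPerm n) (t : Fin n) (s : ℕ) :
    (Aset P t (n - 1) s).card = (Bset P t (n - 1) s).card := by
  apply Finset.card_bij (fun y _ => P.π.symm y)
  · intro y hy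
    simp only [Aset, mem_filter, mem_univ, true_and] at hy
    simp only [Bset, mem_filter, mem_univ, true_and]
    refine ⟨?_, ?_, hy.2.2⟩
    · intro hc
      rw [Equiv.apply_symm_apply] at hc
      exact hy.1 ((congrArg P.π hc).trans (P.π.apply_symm_apply y))
    · have := cval_lt t (P.π.symm y); omega
  · intro a _ b _ hab
    exact P.π.symm.injective hab
  · intro q hq
    simp only [Bset, mem_filter, mem_univ, true_and] at hq
    refine ⟨P.π q, ?_, Equiv.symm_apply_apply _ _⟩
    simp only [Aset, mem_filter, mem_univ, true_and]
    refine ⟨?_, ?_, ?_⟩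
    · intro hc
      exact hq.1 (P.π.injective hc)
    · have := cval_lt t (P.π q); omega
    · rw [Equiv.symm_apply_apply]; exact hq.2.2

lemma cnt_necklace_le (P : DecoratedPerm n) (t r : Fin n) (x : ℕ) :
    cnt t x (necklaceOf P r) ≤ cnt t x (necklaceOf P t) := by
  have hs : cval t r < n := cval_lt t r
  have hcast : t + ((cval t r : ℕ) : Fin n) = r := by
    unfold cval
    rw [Fin.cast_val_eq_self]
    ring
  have h1 := key_identity P t x (cval t r) (le_of_lt hs)
  rw [hcast] at h1
  have h2 := Aset_card_le P t x (cval t r)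
  omega

lemma cnt_top (t : Fin n) (A : Finset (Fin n)) : cnt t (n - 1) A = A.card := by
  unfold cnt
  rw [Finset.filter_true_of_mem]
  intro a _
  have := cval_lt t a
  omega

lemma card_necklace_eq (P : DecoratedPerm n) (t r : Fin n) :
    (necklaceOf P r).card = (necklaceOf P t).card := by
  have hs : cval t r < n := cval_lt t r
  have hcast : t + ((cval t r : ℕ) : Fin n) = r := by
    unfold cval
    rw [Fin.cast_val_eq_self]
    ring
  have h1 := key_identity P t (n - 1) (cval t r) (le_of_lt hs)
  rw [hcast, cnt_top, cnt_top] at h1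
  have h2 := Aset_card_eq P t (cval t r)
  omega

lemma necklace_self_dom (P : DecoratedPerm n) (t r : Fin n) :
    galeLE t (necklaceOf P t) (necklaceOf P r) := by
  rw [galeLE_iff_counts]
  exact ⟨(card_necklace_eq P t r).symm, fun x => cnt_necklace_le P t r x⟩

end AuxContraction2

/-- if `(μ, col'')` is the decorated permutation of `M' = {H ∈ M : j ∈ H}`,
then `μ(j) = j` with `col''(j) = -1`, and switching this color to `+1` gives the decorated
permutation of the contraction `M/{j}`. -/
theorem contraction_decorated_perm (n : ℕ) (P : DecoratedPerm n) (j : Fin n)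
    (hj : P.π j ≠ j) (Q : DecoratedPerm n)
    -- `Q` is the decorated permutation of `M'`:
    (hQ : ∀ H : Finset (Fin n),
      (j ∈ H ∧ ∀ t : Fin n, galeLE t (necklaceOf P t) H) ↔
      (∀ t : Fin n, galeLE t (necklaceOf Q t) H)) :
    Q.π j = j ∧ Q.col j = -1 ∧
    ∀ R : DecoratedPerm n, R.π = Q.π → R.col j = 1 →
      (∀ i : Fin n, i ≠ j → R.col i = Q.col i) →
      ∀ H : Finset (Fin n),
        (∃ H' : Finset (Fin n),
            (∀ t : Fin n, galeLE t (necklaceOf P t) H') ∧ j ∈ H' ∧ H = H'.erase j) ↔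
        (∀ t : Fin n, galeLE t (necklaceOf R t) H) := by
  haveI : NeZero n := ⟨(Fin.pos j).ne'⟩
  -- j belongs to every necklace set of Q
  have hjQ : ∀ r : Fin n, j ∈ necklaceOf Q r := by
    intro r
    exact ((hQ (necklaceOf Q r)).mpr (fun t => necklace_self_dom Q t r)).1
  -- Q fixes j with color -1
  have hfix : Q.π j = j ∧ Q.col j = -1 := by
    have h1 := hjQ (Q.π.symm j)
    rw [mem_necklaceOf] at h1
    rcases h1 with h1 | h1
    · exfalso
      rw [cval_self] at h1
      omega
    · exact h1
  refine ⟨hfix.1, hfix.2, ?_⟩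
  intro R hπ hcolj hcols H
  have hsymmj : Q.π.symm j = j := Q.π.symm_apply_eq.mpr hfix.1.symm
  -- the necklace of R is the necklace of Q with j removed
  have hRneck : ∀ t : Fin n, necklaceOf R t = (necklaceOf Q t).erase j := by
    intro t
    ext i
    rw [Finset.mem_erase, mem_necklaceOf, mem_necklaceOf]
    by_cases hij : i = j
    · subst hij
      have hRπ : R.π i = i := by rw [hπ]; exact hfix.1
      have hRs : R.π.symm i = i := R.π.symm_apply_eq.mpr hRπ.symm
      rw [hRs]
      simp only [lt_irrefl, false_or]
      constructor
      · rintro ⟨_, hc⟩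
        rw [hcolj] at hc
        exact absurd hc (by norm_num)
      · rintro ⟨hc, _⟩
        exact absurd rfl hc
    · have hRs : R.π.symm i = Q.π.symm i := by rw [hπ]
      rw [hRs, hπ, hcols i hij]
      constructor
      · intro h; exact ⟨hij, h⟩
      · rintro ⟨_, h⟩; exact h
  have hjR : ∀ t : Fin n, j ∉ necklaceOf R t := by
    intro t
    rw [hRneck t]
    exact Finset.notMem_erase _ _
  have hQins : ∀ t : Fin n, necklaceOf Q t = insert j ((necklaceOf Q t).erase j) :=
    fun t => (Finset.insert_erase (hjQ t)).symm
  constructor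
  · rintro ⟨H', hgale, hjH', rfl⟩
    have h2 : ∀ t : Fin n, galeLE t (necklaceOf Q t) H' := (hQ H').mp ⟨hjH', hgale⟩
    intro t
    rw [hRneck t]
    have h3 := h2 t
    rw [hQins t] at h3
    conv at h3 => rw [show H' = insert j (H'.erase j) from (Finset.insert_erase hjH').symm]
    exact (galeLE_insert_iff t (Finset.notMem_erase _ _) (Finset.notMem_erase _ _)).mp h3
  · intro hH
    -- j is not in H
    have hjH : j ∉ H := by
      intro hc
      have h1 := hH j
      rw [galeLE_iff_counts] at h1
      have h2 := h1.2 0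
      have h3 : cnt j 0 (necklaceOf R j) = 0 := by
        unfold cnt
        rw [Finset.card_eq_zero, Finset.filter_eq_empty_iff]
        intro a ha
        intro hle
        have : cval j a = 0 := by omega
        rw [cval_eq_zero] at this
        rw [this] at ha
        exact hjR j ha
      have h4 : 0 < cnt j 0 H := by
        apply Finset.card_pos.mpr
        exact ⟨j, Finset.mem_filter.mpr ⟨hc, by rw [cval_self]⟩⟩
      omega
    refine ⟨insert j H, ?_, Finset.mem_insert_self _ _, by rw [Finset.erase_insert hjH]⟩
    have hgaleQ : ∀ t : Fin n, galeLE t (necklaceOf Q t) (insert j H) := by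
      intro t
      rw [hQins t]
      refine (galeLE_insert_iff t (Finset.notMem_erase _ _) hjH).mpr ?_
      rw [← hRneck t]
      exact hH t
    exact ((hQ (insert j H)).mpr hgaleQ).2
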